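/- Let f₁,…,f_N, g₁,…,g_N and f̃₁,…,f̃_Ñ, g̃₁,…,g̃_Ñ be real C¹ functions on [a,b] with absolutely continuous derivatives, satisfying fⱼ'' = (V + κⱼ²)fⱼ, gⱼ'' = (V + κⱼ²)gⱼ, f̃ⱼ'' = (V + κ̃ⱼ²)f̃ⱼ, g̃ⱼ'' = (V + κ̃ⱼ²)g̃ⱼ a.e. on [a,b], where V ∈ L¹[a,b] and κⱼ, κ̃ⱼ > 0. Suppose mⱼ, m̃ⱼ > 0 and that for every l = 0,1,…, the function x ↦ Σⱼ m̃ⱼ (κ̃ⱼ²)^l (f̃ⱼ g̃ⱼ)(x) − Σⱼ mⱼ (κⱼ²)^l (fⱼ gⱼ)(x) is constant Cₗ on [a,b] with Cₗ = 0. If there exists x' ∈ [a,b] with (fⱼ gⱼ)(x') ≠ 0 for all j ≤ N and (f̃ⱼ g̃ⱼ)(x') ≠ 0 for all j ≤ Ñ, and the κⱼ² are pairwise distinct and the κ̃ⱼ² are pairwise distinct, then N = Ñ and, after reordering, κⱼ = κ̃ⱼ and mⱼ (fⱼ gⱼ)(x') = m̃ⱼ (f̃ⱼ g̃ⱼ)(x')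 for all j. -/
import Mathlib

section Aux
open Finset Polynomial

lemma vandermonde_zero (S : Finset ℝ) (w : ℝ → ℝ)
    (h : ∀ l : ℕ, ∑ v ∈ S, w v * v ^ l = 0) : ∀ v ∈ S, w v = 0 := by
  intro v₀ hv₀
  set Q : Polynomial ℝ := ∏ u ∈ S.erase v₀, (X - C u) with hQ
  have hsum : ∑ v ∈ S, w v * Q.eval v = 0 := by
    calc ∑ v ∈ S, w v * Q.eval v
        = ∑ v ∈ S, ∑ i ∈ Finset.range (Q.natDegree + 1), Q.coeff i * (w v * v ^ i) := by
          refine Finset.sum_congr rfl fun v _ => ?_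
          rw [Polynomial.eval_eq_sum_range, Finset.mul_sum]
          exact Finset.sum_congr rfl fun i _ => by ring
      _ = ∑ i ∈ Finset.range (Q.natDegree + 1), ∑ v ∈ S, Q.coeff i * (w v * v ^ i) :=
          Finset.sum_comm
      _ = ∑ i ∈ Finset.range (Q.natDegree + 1), Q.coeff i * ∑ v ∈ S, w v * v ^ i := by
          simp [Finset.mul_sum]
      _ = 0 := by simp [h]
  have hzero : ∀ v ∈ S, v ≠ v₀ → w v * Q.eval v = 0 := by
    intro v hv hne
    have : Q.eval v = 0 := by
      rw [hQ, Polynomial.eval_prod]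
      exact Finset.prod_eq_zero (Finset.mem_erase.2 ⟨hne, hv⟩) (by simp)
    simp [this]
  have hQv₀ : Q.eval v₀ ≠ 0 := by
    rw [hQ, Polynomial.eval_prod]
    refine Finset.prod_ne_zero_iff.2 fun u hu => ?_
    have := (Finset.mem_erase.1 hu).1
    simp only [Polynomial.eval_sub, Polynomial.eval_X, Polynomial.eval_C, sub_ne_zero]
    intro h'; exact this h'.symm
  rw [Finset.sum_eq_single_of_mem v₀ hv₀ hzero] at hsum
  exact (mul_eq_zero.1 hsum).resolve_right hQv₀

lemma fiber_sum {n : ℕ} (μ : Fin n → ℝ) (c : Fin n → ℝ) (hμ : Function.Injective μ)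
    (j : Fin n) : ∑ i ∈ univ.filter (fun i => μ i = μ j), c i = c j := by
  have : univ.filter (fun i => μ i = μ j) = {j} := by
    ext i
    simp only [mem_filter, mem_univ, true_and, mem_singleton]
    exact ⟨fun h => hμ h, fun h => by rw [h]⟩
  rw [this, sum_singleton]

lemma matching_abstract {N Ntil : ℕ} (μ : Fin N → ℝ) (μt : Fin Ntil → ℝ)
    (c : Fin N → ℝ) (ct : Fin Ntil → ℝ)
    (hc : ∀ j, c j ≠ 0) (hct : ∀ j, ct j ≠ 0)
    (hμ : Function.Injective μ) (hμt : Function.Injective μt)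
    (h : ∀ l : ℕ, ∑ j, ct j * μt j ^ l = ∑ j, c j * μ j ^ l) :
    ∃ σ : Fin N ≃ Fin Ntil, ∀ j, μ j = μt (σ j) ∧ c j = ct (σ j) := by
  classical
  set S : Finset ℝ := (univ.image μ) ∪ (univ.image μt) with hS
  set w : ℝ → ℝ := fun v =>
    (∑ i ∈ univ.filter (fun i => μt i = v), ct i) -
    (∑ j ∈ univ.filter (fun j => μ j = v), c j) with hwdef
  have hmaps : ∀ j ∈ (univ : Finset (Fin N)), μ j ∈ S :=
    fun j _ => mem_union_left _ (mem_image_of_mem _ (mem_univ j))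
  have hmapst : ∀ i ∈ (univ : Finset (Fin Ntil)), μt i ∈ S :=
    fun i _ => mem_union_right _ (mem_image_of_mem _ (mem_univ i))
  have hw : ∀ l : ℕ, ∑ v ∈ S, w v * v ^ l = 0 := by
    intro l
    have e1 : ∑ v ∈ S, w v * v ^ l =
        (∑ v ∈ S, ∑ i ∈ univ.filter (fun i => μt i = v), ct i * μt i ^ l) -
        (∑ v ∈ S, ∑ j ∈ univ.filter (fun j => μ j = v), c j * μ j ^ l) := by
      rw [← Finset.sum_sub_distrib]
      refine Finset.sum_congr rfl fun v hv => ?_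
      have e2 : ∀ (n : ℕ) (ν : Fin n → ℝ) (d : Fin n → ℝ),
          ∑ i ∈ univ.filter (fun i => ν i = v), d i * ν i ^ l =
          (∑ i ∈ univ.filter (fun i => ν i = v), d i) * v ^ l := by
        intro n ν d
        rw [Finset.sum_mul]
        exact Finset.sum_congr rfl fun i hi => by rw [(mem_filter.1 hi).2]
      rw [e2, e2, hwdef]; ring
    rw [e1, Finset.sum_fiberwise_of_maps_to hmapst, Finset.sum_fiberwise_of_maps_to hmaps,
      h l, sub_self]
  have hwz := vandermonde_zero S w hw
  have key : ∀ j : Fin N, ∑ i ∈ univ.filter (fun i => μt i = μ j), ct i = c j := by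
    intro j
    have h0 := hwz (μ j) (hmaps j (mem_univ j))
    have := sub_eq_zero.1 h0
    rw [this]  -- ?
    exact (fiber_sum μ c hμ j)
  have hex : ∀ j : Fin N, ∃ i, μt i = μ j ∧ ct i = c j := by
    intro j
    have hne : (univ.filter (fun i => μt i = μ j)).Nonempty := by
      by_contra hemp
      rw [Finset.not_nonempty_iff_eq_empty] at hemp
      have := key j
      rw [hemp, Finset.sum_empty] at this
      exact hc j this.symm
    obtain ⟨i, hi⟩ := hne
    have hi' : μt i = μ j := (mem_filter.1 hi).2
    refine ⟨i, hi', ?_⟩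
    have := key j
    rw [← hi'] at this
    rw [fiber_sum μt ct hμt i] at this
    exact this
  have hex' : ∀ i : Fin Ntil, ∃ j : Fin N, μ j = μt i := by
    intro i
    have h0 := hwz (μt i) (hmapst i (mem_univ i))
    have hsum : ∑ j ∈ univ.filter (fun j => μ j = μt i), c j =
        ∑ i' ∈ univ.filter (fun i' => μt i' = μt i), ct i' := (sub_eq_zero.1 h0).symm
    rw [fiber_sum μt ct hμt i] at hsum
    by_contra hemp
    push_neg at hemp
    have : univ.filter (fun j => μ j = μt i) = ∅ :=
      Finset.filter_eq_empty_iff.2 fun j _ => hemp j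
    rw [this, Finset.sum_empty] at hsum
    exact hct i hsum.symm
  choose σ hσ₁ hσ₂ using hex
  have hinj : Function.Injective σ := by
    intro j₁ j₂ hjj
    apply hμ
    rw [← hσ₁ j₁, ← hσ₁ j₂, hjj]
  have hsurj : Function.Surjective σ := by
    intro i
    obtain ⟨j, hj⟩ := hex' i
    exact ⟨j, hμt (by rw [hσ₁ j, hj])⟩
  exact ⟨Equiv.ofBijective σ ⟨hinj, hsurj⟩, fun j => ⟨(hσ₁ j).symm, (hσ₂ j).symm⟩⟩

end Aux


open MeasureTheory Set

/-- Step 2 of the main theorem: if all the weighted power-sum combinations of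
two families of products of Sturm–Liouville solutions vanish identically on
`[a,b]`, and there is a common point where none of the products vanishes, then
the two families match after reordering. -/
theorem matching_of_families
    (a b : ℝ) (hab : a ≤ b) (N Ntil : ℕ)
    (V : ℝ → ℝ) (hV : IntegrableOn V (Set.Icc a b))
    (κ : Fin N → ℝ) (κt : Fin Ntil → ℝ)
    (m : Fin N → ℝ) (mt : Fin Ntil → ℝ)
    (f g f' g' : Fin N → ℝ → ℝ) (ft gt ft' gt' : Fin Ntil → ℝ → ℝ)
    (hκpos : ∀ j, 0 < κ j) (hκtpos : ∀ j, 0 < κt j)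
    (hmpos : ∀ j, 0 < m j) (hmtpos : ∀ j, 0 < mt j)
    (hfC1 : ∀ j, ∀ x ∈ Set.Icc a b, HasDerivAt (f j) (f' j x) x)
    (hgC1 : ∀ j, ∀ x ∈ Set.Icc a b, HasDerivAt (g j) (g' j x) x)
    (hftC1 : ∀ j, ∀ x ∈ Set.Icc a b, HasDerivAt (ft j) (ft' j x) x)
    (hgtC1 : ∀ j, ∀ x ∈ Set.Icc a b, HasDerivAt (gt j) (gt' j x) x)
    (hf'' : ∀ j, ∀ᵐ x ∂(volume.restrict (Set.Icc a b)),
      HasDerivAt (f' j) ((V x + (κ j) ^ 2) * f j x) x)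
    (hg'' : ∀ j, ∀ᵐ x ∂(volume.restrict (Set.Icc a b)),
      HasDerivAt (g' j) ((V x + (κ j) ^ 2) * g j x) x)
    (hft'' : ∀ j, ∀ᵐ x ∂(volume.restrict (Set.Icc a b)),
      HasDerivAt (ft' j) ((V x + (κt j) ^ 2) * ft j x) x)
    (hgt'' : ∀ j, ∀ᵐ x ∂(volume.restrict (Set.Icc a b)),
      HasDerivAt (gt' j) ((V x + (κt j) ^ 2) * gt j x) x)
    (hvanish : ∀ l : ℕ, ∀ x ∈ Set.Icc a b,
      (∑ j : Fin Ntil, mt j * ((κt j) ^ 2) ^ l * (ft j x * gt j x)) -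
      (∑ j : Fin N, m j * ((κ j) ^ 2) ^ l * (f j x * g j x)) = 0)
    (x' : ℝ) (hx' : x' ∈ Set.Icc a b)
    (hfg : ∀ j : Fin N, f j x' * g j x' ≠ 0)
    (hftgt : ∀ j : Fin Ntil, ft j x' * gt j x' ≠ 0)
    (hκinj : Function.Injective fun j => (κ j) ^ 2)
    (hκtinj : Function.Injective fun j => (κt j) ^ 2) :
    N = Ntil ∧ ∃ σ : Fin N ≃ Fin Ntil, ∀ j : Fin N,
      κ j = κt (σ j) ∧
      m j * (f j x' * g j x') = mt (σ j) * (ft (σ j) x' * gt (σ j) x') := by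
  classical
  obtain ⟨σ, hσ⟩ := matching_abstract (fun j => (κ j) ^ 2) (fun j => (κt j) ^ 2)
    (fun j => m j * (f j x' * g j x')) (fun j => mt j * (ft j x' * gt j x'))
    (fun j => mul_ne_zero (hmpos j).ne' (hfg j))
    (fun j => mul_ne_zero (hmtpos j).ne' (hftgt j))
    hκinj hκtinj
    (fun l => by
      have h0 := hvanish l x' hx'
      have e : ∀ (n : ℕ) (κ' : Fin n → ℝ) (m' : Fin n → ℝ) (c' : Fin n → ℝ),
          ∑ j, m' j * (κ' j ^ 2) ^ l * c' j = ∑ j, m' j * c' j * (κ' j ^ 2) ^ l :=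
        fun n κ' m' c' => Finset.sum_congr rfl fun j _ => by ring
      rw [e N κ m (fun j => f j x' * g j x'), e Ntil κt mt (fun j => ft j x' * gt j x')] at h0
      linarith)
  refine ⟨by simpa using Fintype.card_congr σ, σ, fun j => ?_⟩
  obtain ⟨h1, h2⟩ := hσ j
  refine ⟨?_, h2⟩
  have h3 : (κ j - κt (σ j)) * (κ j + κt (σ j)) = 0 := by linear_combination h1
  rcases mul_eq_zero.1 h3 with h4 | h4
  · linarith
  · nlinarith [hκpos j, hκtpos (σ j)]
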